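/- Let n ≥ 1 be an integer and let α > 0, β > 0, c > 0, η > 0, and γ ∈ (0,1]. There exists a constant C > 0 such that for all t > 0 and all D > 0, ∫₀^∞ s^{-(n+γ)/2} e^{-cD/s} ( ∫₀^∞ e^{-η s w} (t w)^α / (1 + (t w)^β) dw ) ds ≤ C t^α D^{-(n/2 + γ/2 + α)}. -/

import Mathlib

open MeasureTheory Set Real


lemma aux_inner (b q : ℝ) (hb : 0 < b) (hq : 0 < q) :
    ∫⁻ w in Ioi (0:ℝ), ENNReal.ofReal (Real.exp (-(b*w)) * w ^ q)
      = ENNReal.ofReal ((1/b)^(q+1) * Real.Gamma (q+1)) := by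
  have hint : IntegrableOn (fun w : ℝ => Real.exp (-(b*w)) * w ^ q) (Ioi 0) := by
    have := integrableOn_rpow_mul_exp_neg_mul_rpow (s := q) (p := 1)
      (by linarith) zero_lt_one hb
    simp only [rpow_one] at this
    exact this.congr_fun (fun x hx => by ring_nf) measurableSet_Ioi
  rw [← MeasureTheory.ofReal_integral_eq_lintegral_ofReal hint ?hnn]
  · congr 1
    have h := integral_rpow_mul_exp_neg_mul_Ioi (a := q+1) (r := b) (by linarith) hb
    simp only [add_sub_cancel_right] at h
    rw [← h]
    exact setIntegral_congr_fun measurableSet_Ioi (fun x hx => by ring)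
  case hnn =>
    filter_upwards [ae_restrict_mem measurableSet_Ioi] with x hx
    have hx0 : (0:ℝ) < x := hx
    positivity

lemma aux_outer (p a : ℝ) (hp : 0 < p) (ha : 0 < a) :
    ∫⁻ x in Ioi (0:ℝ), ENNReal.ofReal (x ^ (-(p+1)) * Real.exp (-a / x))
      = ENNReal.ofReal ((1/a)^p * Real.Gamma p) := by
  set g : ℝ → ℝ := fun y => y ^ (p-1) * Real.exp (-(a*y)) with hg
  have hgint : IntegrableOn g (Ioi 0) := by
    have := integrableOn_rpow_mul_exp_neg_mul_rpow (s := p-1) (p := 1)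
      (by linarith) zero_lt_one ha
    simp only [rpow_one] at this
    exact this.congr_fun (fun x hx => by simp only [hg]; ring_nf) measurableSet_Ioi
  have key : ∀ x ∈ Ioi (0:ℝ),
      (|(-1:ℝ)| * x ^ ((-1:ℝ) - 1)) • g (x ^ (-1:ℝ))
        = x ^ (-(p+1)) * Real.exp (-a / x) := by
    intro x hx
    have hx0 : (0:ℝ) < x := hx
    have h1 : (x ^ (-1:ℝ)) ^ (p-1) = x ^ (-(p-1)) := by
      rw [← Real.rpow_mul hx0.le]; ring_nf
    have h2 : -(a * x ^ (-1:ℝ)) = -a / x := by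
      rw [Real.rpow_neg_one]; field_simp
    simp only [hg, smul_eq_mul, abs_neg, abs_one, one_mul, h1, h2]
    rw [← mul_assoc, ← Real.rpow_add hx0]
    congr 2
    ring
  have hint : IntegrableOn (fun x : ℝ => x ^ (-(p+1)) * Real.exp (-a / x)) (Ioi 0) := by
    have h := (integrableOn_Ioi_comp_rpow_iff g (p := (-1:ℝ)) (by norm_num)).2 hgint
    exact (h.congr_fun (fun x hx => by
      have := key x hx; simpa using this) measurableSet_Ioi)
  rw [← MeasureTheory.ofReal_integral_eq_lintegral_ofReal hint ?hnn]
  · congr 1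
    have hsub := integral_comp_rpow_Ioi g (p := (-1:ℝ)) (by norm_num)
    have h2 : (∫ x in Ioi (0:ℝ), x ^ (-(p+1)) * Real.exp (-a / x)) = ∫ y in Ioi (0:ℝ), g y := by
      rw [← hsub]
      exact setIntegral_congr_fun measurableSet_Ioi (fun x hx => (key x hx).symm)
    rw [h2, hg]
    exact integral_rpow_mul_exp_neg_mul_Ioi hp ha
  case hnn =>
    filter_upwards [ae_restrict_mem measurableSet_Ioi] with x hx
    have hx0 : (0:ℝ) < x := hx
    positivity

/-- The integral estimate underlying the Hölder-continuity kernel bound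
`|K_{ψ(tL)}(x+h,y) − K_{ψ(tL)}(x,y)| ≤ C (|h|/|x−y|)^γ t^α / |x−y|^{n+2α}`,
with `D` playing the role of `|x−y|²`. -/
theorem stmt_2 (n : ℕ) (hn : 1 ≤ n) (α β c η γ : ℝ)
    (hα : 0 < α) (hβ : 0 < β) (hc : 0 < c) (hη : 0 < η)
    (hγ0 : 0 < γ) (hγ1 : γ ≤ 1) :
    ∃ C > 0, ∀ t > (0:ℝ), ∀ D > (0:ℝ),
      (∫⁻ s in Ioi (0:ℝ),
        ENNReal.ofReal (s ^ (-((n:ℝ) + γ)/2) * Real.exp (-(c * D) / s)) *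
          ∫⁻ w in Ioi (0:ℝ),
            ENNReal.ofReal (Real.exp (-(η * s * w)) * ((t * w) ^ α / (1 + (t * w) ^ β))))
      ≤ ENNReal.ofReal (C * t ^ α * D ^ (-((n:ℝ)/2 + γ/2 + α))) := by
  set p : ℝ := (n:ℝ)/2 + γ/2 + α with hp_def
  have hp : 0 < p := by rw [hp_def]; positivity
  refine ⟨Real.Gamma (α+1) * (1/η)^(α+1) * (1/c)^p * Real.Gamma p, by positivity, ?_⟩
  intro t ht D hD
  -- inner bound, for each s > 0
  have inner_bd : ∀ s ∈ Ioi (0:ℝ),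
      (∫⁻ w in Ioi (0:ℝ),
        ENNReal.ofReal (Real.exp (-(η * s * w)) * ((t * w) ^ α / (1 + (t * w) ^ β))))
      ≤ ENNReal.ofReal (t ^ α * ((1/(η*s))^(α+1) * Real.Gamma (α+1))) := by
    intro s hs
    have hs0 : (0:ℝ) < s := hs
    calc (∫⁻ w in Ioi (0:ℝ),
        ENNReal.ofReal (Real.exp (-(η * s * w)) * ((t * w) ^ α / (1 + (t * w) ^ β))))
        ≤ ∫⁻ w in Ioi (0:ℝ),
            ENNReal.ofReal (t ^ α) * ENNReal.ofReal (Real.exp (-(η*s*w)) * w ^ α) := by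
          refine setLIntegral_mono (by fun_prop) (fun w hw => ?_)
          have hw0 : (0:ℝ) < w := hw
          rw [← ENNReal.ofReal_mul (by positivity)]
          refine ENNReal.ofReal_le_ofReal ?_
          have h1 : (t * w) ^ α / (1 + (t * w) ^ β) ≤ (t*w) ^ α :=
            div_le_self (by positivity) (le_add_of_nonneg_right (by positivity))
          calc Real.exp (-(η * s * w)) * ((t * w) ^ α / (1 + (t * w) ^ β))
              ≤ Real.exp (-(η * s * w)) * (t*w) ^ α :=
                mul_le_mul_of_nonneg_left h1 (Real.exp_pos _).le
            _ = t ^ α * (Real.exp (-(η*s*w)) * w ^ α) := by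
                rw [Real.mul_rpow ht.le hw0.le]; ring
      _ = ENNReal.ofReal (t ^ α) *
            ∫⁻ w in Ioi (0:ℝ), ENNReal.ofReal (Real.exp (-(η*s*w)) * w ^ α) :=
          lintegral_const_mul' _ _ ENNReal.ofReal_ne_top
      _ = ENNReal.ofReal (t ^ α * ((1/(η*s))^(α+1) * Real.Gamma (α+1))) := by
          have := aux_inner (η*s) α (by positivity) hα
          simp only [mul_assoc] at this ⊢
          rw [this, ← ENNReal.ofReal_mul (by positivity)]
  -- outer estimate
  set K : ℝ := t ^ α * ((1/η)^(α+1) * Real.Gamma (α+1)) with hK_def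
  have hK : 0 ≤ K := by positivity
  calc (∫⁻ s in Ioi (0:ℝ),
        ENNReal.ofReal (s ^ (-((n:ℝ) + γ)/2) * Real.exp (-(c * D) / s)) *
          ∫⁻ w in Ioi (0:ℝ),
            ENNReal.ofReal (Real.exp (-(η * s * w)) * ((t * w) ^ α / (1 + (t * w) ^ β))))
      ≤ ∫⁻ s in Ioi (0:ℝ),
          ENNReal.ofReal K * ENNReal.ofReal (s ^ (-(p+1)) * Real.exp (-(c*D) / s)) := by
        refine setLIntegral_mono (by fun_prop) (fun s hs => ?_)
        have hs0 : (0:ℝ) < s := hs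
        calc ENNReal.ofReal (s ^ (-((n:ℝ) + γ)/2) * Real.exp (-(c * D) / s)) *
              (∫⁻ w in Ioi (0:ℝ),
                ENNReal.ofReal (Real.exp (-(η * s * w)) * ((t * w) ^ α / (1 + (t * w) ^ β))))
            ≤ ENNReal.ofReal (s ^ (-((n:ℝ) + γ)/2) * Real.exp (-(c * D) / s)) *
              ENNReal.ofReal (t ^ α * ((1/(η*s))^(α+1) * Real.Gamma (α+1))) :=
            mul_le_mul_right (inner_bd s hs) _
          _ = ENNReal.ofReal K * ENNReal.ofReal (s ^ (-(p+1)) * Real.exp (-(c*D) / s)) := by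
            rw [← ENNReal.ofReal_mul (by positivity), ← ENNReal.ofReal_mul hK]
            congr 1
            have h1 : (1/(η*s))^(α+1) = (1/η)^(α+1) * s ^ (-(α+1)) := by
              rw [one_div, mul_inv, Real.mul_rpow (by positivity) (by positivity),
                Real.inv_rpow hs0.le, ← Real.rpow_neg hs0.le, one_div]
            have h2 : s ^ (-((n:ℝ) + γ)/2) * s ^ (-(α+1)) = s ^ (-(p+1)) := by
              rw [← Real.rpow_add hs0]; congr 1; rw [hp_def]; ring
            rw [h1, hK_def, ← h2]; ring
    _ = ENNReal.ofReal K *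
          ∫⁻ s in Ioi (0:ℝ), ENNReal.ofReal (s ^ (-(p+1)) * Real.exp (-(c*D) / s)) :=
        lintegral_const_mul' _ _ ENNReal.ofReal_ne_top
    _ = ENNReal.ofReal (K * ((1/(c*D))^p * Real.Gamma p)) := by
        rw [aux_outer p (c*D) hp (by positivity), ← ENNReal.ofReal_mul hK]
    _ ≤ ENNReal.ofReal (Real.Gamma (α+1) * (1/η)^(α+1) * (1/c)^p * Real.Gamma p
          * t ^ α * D ^ (-((n:ℝ)/2 + γ/2 + α))) := by
        refine ENNReal.ofReal_le_ofReal (le_of_eq ?_)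
        have h3 : (1/(c*D))^p = (1/c)^p * D ^ (-p) := by
          rw [one_div, mul_inv, Real.mul_rpow (by positivity) (by positivity),
            Real.inv_rpow hD.le, ← Real.rpow_neg hD.le, one_div]
        rw [hK_def, h3, hp_def]; ring
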